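/- Let k be a positive integer, n ∈ {1,…,2^{k−1}} and let m ≥ 2 be a natural number. For every x with n/2^{k−1} ≤ x ≤ 1, the first integral of the Chebyshev wavelet is constant: ∫₀^x φ_{nm}(τ) dτ = γ_m 2^{−(k−1)/2 − 2} ρ_m, where ρ_m = (1 − (−1)^{m+1})/(m+1) − (1 − (−1)^{m−1})/(m−1). -/

import Mathlib

open Real intervalIntegral

/-- Normalizing constant of the Chebyshev wavelets: `γ 0 = √(2/π)`, `γ m = 2/√π` for `m ≥ 1`. -/
noncomputable def chebGamma (m : ℕ) : ℝ :=
  if m = 0 then Real.sqrt (2 / Real.pi) else 2 / Real.sqrt Real.pi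

lemma chebT_eval_one (j : ℕ) : (Polynomial.Chebyshev.T ℝ (j : ℤ)).eval 1 = 1 := by
  induction j using Nat.twoStepInduction with
  | zero => simp
  | one => simp
  | more j h1 h2 =>
    have : ((j : ℤ) + 2) = ((j : ℤ) + 2) := rfl
    push_cast
    rw [Polynomial.Chebyshev.T_add_two]
    push_cast at h1 h2
    simp only [Polynomial.eval_sub, Polynomial.eval_mul, Polynomial.eval_ofNat,
      Polynomial.eval_X, Polynomial.eval_add, Polynomial.eval_one]
    rw [h1, h2]; ring

lemma chebT_eval_neg_one (j : ℕ) :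
    (Polynomial.Chebyshev.T ℝ (j : ℤ)).eval (-1) = (-1 : ℝ) ^ j := by
  induction j using Nat.twoStepInduction with
  | zero => simp
  | one => simp
  | more j h1 h2 =>
    push_cast
    rw [Polynomial.Chebyshev.T_add_two]
    push_cast at h1 h2
    simp only [Polynomial.eval_sub, Polynomial.eval_mul, Polynomial.eval_ofNat,
      Polynomial.eval_X, Polynomial.eval_add, Polynomial.eval_one]
    rw [h1, h2]; ring

lemma chebU_sub_U (j : ℤ) :
    Polynomial.Chebyshev.U ℝ j - Polynomial.Chebyshev.U ℝ (j - 2)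
      = 2 * Polynomial.Chebyshev.T ℝ j := by
  linear_combination (-1 : Polynomial ℝ) * Polynomial.Chebyshev.U_eq ℝ j
    - 2 * Polynomial.Chebyshev.T_eq_U_sub_X_mul_U ℝ j

lemma cheb_antideriv (m : ℕ) (hm : 2 ≤ m) (u : ℝ) :
    HasDerivAt (fun u : ℝ =>
        (Polynomial.Chebyshev.T ℝ ((m : ℤ) + 1)).eval u / (2 * ((m : ℝ) + 1))
          - (Polynomial.Chebyshev.T ℝ ((m : ℤ) - 1)).eval u / (2 * ((m : ℝ) - 1)))
      ((Polynomial.Chebyshev.T ℝ (m : ℤ)).eval u) u := by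
  have hm1 : ((m : ℝ) + 1) ≠ 0 := by positivity
  have hm2 : ((m : ℝ) - 1) ≠ 0 := by
    have : (2 : ℝ) ≤ m := by exact_mod_cast hm
    linarith
  have h1 := ((Polynomial.Chebyshev.T ℝ ((m : ℤ) + 1)).hasDerivAt u).div_const (2 * ((m : ℝ) + 1))
  have h2 := ((Polynomial.Chebyshev.T ℝ ((m : ℤ) - 1)).hasDerivAt u).div_const (2 * ((m : ℝ) - 1))
  have h := h1.sub h2
  convert h using 1
  case e'_4 => rfl
  case e'_5 => rfl
  case e'_8 => rfl
  rw [Polynomial.Chebyshev.T_derivative_eq_U, Polynomial.Chebyshev.T_derivative_eq_U]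
  have hU := congrArg (Polynomial.eval u) (chebU_sub_U (m : ℤ))
  simp only [Polynomial.eval_sub, Polynomial.eval_mul, Polynomial.eval_ofNat] at hU
  simp only [Polynomial.eval_mul, Polynomial.eval_intCast]
  push_cast
  rw [show ((m : ℤ) + 1 - 1) = (m : ℤ) from by ring, show ((m : ℤ) - 1 - 1) = (m : ℤ) - 2 from by ring]
  field_simp
  linear_combination (-1 : ℝ) * hU

lemma cheb_integral_T (m : ℕ) (hm : 2 ≤ m) :
    ∫ u in (-1 : ℝ)..1, (Polynomial.Chebyshev.T ℝ (m : ℤ)).eval u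
      = (1 - (-1 : ℝ) ^ (m + 1)) / (2 * ((m : ℝ) + 1))
          - (1 - (-1 : ℝ) ^ (m - 1)) / (2 * ((m : ℝ) - 1)) := by
  rw [intervalIntegral.integral_eq_sub_of_hasDerivAt
    (f := fun u : ℝ =>
        (Polynomial.Chebyshev.T ℝ ((m : ℤ) + 1)).eval u / (2 * ((m : ℝ) + 1))
          - (Polynomial.Chebyshev.T ℝ ((m : ℤ) - 1)).eval u / (2 * ((m : ℝ) - 1)))
    (fun u _ => cheb_antideriv m hm u)
    ((Polynomial.Chebyshev.T ℝ (m : ℤ)).continuous_aeval.intervalIntegrable _ _)]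
  have e1 : ((m : ℤ) + 1) = ((m + 1 : ℕ) : ℤ) := by push_cast; ring
  have e2 : ((m : ℤ) - 1) = ((m - 1 : ℕ) : ℤ) := by
    have : 1 ≤ m := by omega
    push_cast [this]; ring
  rw [e1, e2, chebT_eval_one, chebT_eval_one, chebT_eval_neg_one, chebT_eval_neg_one]
  ring

/-- **First integral of the Chebyshev wavelet for `m ≥ 2` beyond the support (Eq. (2.14)).**
For `n/2^{k−1} ≤ x ≤ 1`,
`∫₀^x φ_{nm}(τ) dτ = γ_m 2^{−(k−1)/2−2} ρ_m`
where `ρ_m = (1 − (−1)^{m+1})/(m+1) − (1 − (−1)^{m−1})/(m−1)`. -/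
theorem chebyshev_wavelet_first_integral_tail
    (k n m : ℕ) (hk : 0 < k) (hn1 : 1 ≤ n) (hn2 : n ≤ 2 ^ (k - 1)) (hm : 2 ≤ m)
    (x : ℝ) (hx1 : (n : ℝ) / 2 ^ (k - 1) ≤ x) (hx2 : x ≤ 1) :
    ∫ τ in (0 : ℝ)..x,
        (if ((n : ℝ) - 1) / 2 ^ (k - 1) ≤ τ ∧ τ < (n : ℝ) / 2 ^ (k - 1) then
          chebGamma m * (2 : ℝ) ^ (((k : ℝ) - 1) / 2) *
            (Polynomial.Chebyshev.T ℝ (m : ℤ)).eval ((2 : ℝ) ^ k * τ - 2 * n + 1)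
        else 0)
      = chebGamma m * (2 : ℝ) ^ (-((k : ℝ) - 1) / 2 - 2) *
          ((1 - (-1 : ℝ) ^ (m + 1)) / ((m : ℝ) + 1) - (1 - (-1 : ℝ) ^ (m - 1)) / ((m : ℝ) - 1)) := by
  set a : ℝ := ((n : ℝ) - 1) / 2 ^ (k - 1) with ha
  set b : ℝ := (n : ℝ) / 2 ^ (k - 1) with hb
  set F : ℝ → ℝ := fun τ =>
    chebGamma m * (2 : ℝ) ^ (((k : ℝ) - 1) / 2) *
      (Polynomial.Chebyshev.T ℝ (m : ℤ)).eval ((2 : ℝ) ^ k * τ - 2 * n + 1) with hF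
  have hpow : (0 : ℝ) < 2 ^ (k - 1) := by positivity
  have hn1' : (1 : ℝ) ≤ (n : ℝ) := by exact_mod_cast hn1
  have h0a : 0 ≤ a := by apply div_nonneg (by linarith) hpow.le
  have hab : a < b := by
    rw [ha, hb, div_lt_div_iff₀ hpow hpow]
    nlinarith [hpow]
  have hbx : b ≤ x := hx1
  have h0x : (0 : ℝ) ≤ x := le_trans (le_trans h0a hab.le) hbx
  have hind : (fun τ => if a ≤ τ ∧ τ < b then F τ else 0)
      = Set.indicator (Set.Ico a b) F := by
    funext τ; simp [Set.indicator_apply, Set.mem_Ico]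
  calc ∫ τ in (0 : ℝ)..x, (if a ≤ τ ∧ τ < b then F τ else 0)
      = ∫ τ in Set.Ioc (0 : ℝ) x, Set.indicator (Set.Ico a b) F τ := by
        rw [intervalIntegral.integral_of_le h0x, hind]
    _ = ∫ τ in Set.Ico a b ∩ Set.Ioc 0 x, F τ := by
        rw [MeasureTheory.integral_indicator measurableSet_Ico,
          MeasureTheory.Measure.restrict_restrict measurableSet_Ico]
    _ = ∫ τ in Set.Ioc a b, F τ := by
        apply MeasureTheory.setIntegral_congr_set
        rw [MeasureTheory.ae_eq_set]
        constructor
        · refine MeasureTheory.measure_mono_null ?_ (MeasureTheory.measure_singleton a)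
          intro τ hτ
          simp only [Set.mem_diff, Set.mem_inter_iff, Set.mem_Ico, Set.mem_Ioc,
            not_and_or, not_lt, not_le, Set.mem_singleton_iff] at hτ ⊢
          rcases hτ with ⟨⟨⟨h1, h2⟩, _, _⟩, h5⟩
          rcases h5 with h5 | h5 <;> linarith
        · refine MeasureTheory.measure_mono_null ?_ (MeasureTheory.measure_singleton b)
          intro τ hτ
          simp only [Set.mem_diff, Set.mem_inter_iff, Set.mem_Ico, Set.mem_Ioc,
            not_and_or, not_lt, not_le, Set.mem_singleton_iff] at hτ ⊢
          rcases hτ with ⟨⟨h1, h2⟩, h5⟩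
          rcases h5 with (h5 | h5) | (h5 | h5) <;> linarith
    _ = ∫ τ in a..b, F τ := (intervalIntegral.integral_of_le hab.le).symm
    _ = chebGamma m * (2 : ℝ) ^ (((k : ℝ) - 1) / 2) *
          ∫ τ in a..b, (Polynomial.Chebyshev.T ℝ (m : ℤ)).eval ((2 : ℝ) ^ k * τ + (1 - 2 * n)) := by
        simp only [hF, show ∀ τ : ℝ, (2 : ℝ) ^ k * τ - 2 * (n : ℝ) + 1
          = (2 : ℝ) ^ k * τ + (1 - 2 * (n : ℝ)) from fun τ => by ring]
        rw [intervalIntegral.integral_const_mul]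
    _ = chebGamma m * (2 : ℝ) ^ (((k : ℝ) - 1) / 2) *
          (((2 : ℝ) ^ k)⁻¹ • ∫ u in (-1 : ℝ)..1, (Polynomial.Chebyshev.T ℝ (m : ℤ)).eval u) := by
        have hc : ((2 : ℝ) ^ k) ≠ 0 := by positivity
        have h2k : (2 : ℝ) ^ k = 2 * 2 ^ (k - 1) := by
          rw [← pow_succ']; congr 1; omega
        have ea : (2 : ℝ) ^ k * a + (1 - 2 * (n : ℝ)) = -1 := by
          rw [ha, h2k]; field_simp; ring
        have eb : (2 : ℝ) ^ k * b + (1 - 2 * (n : ℝ)) = 1 := by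
          rw [hb, h2k]; field_simp; ring
        rw [intervalIntegral.integral_comp_mul_add
          (fun u => (Polynomial.Chebyshev.T ℝ (m : ℤ)).eval u) hc (1 - 2 * (n : ℝ)), ea, eb]
    _ = chebGamma m * (2 : ℝ) ^ (-((k : ℝ) - 1) / 2 - 2) *
          ((1 - (-1 : ℝ) ^ (m + 1)) / ((m : ℝ) + 1)
            - (1 - (-1 : ℝ) ^ (m - 1)) / ((m : ℝ) - 1)) := by
        rw [cheb_integral_T m hm, smul_eq_mul]
        have hm1 : ((m : ℝ) + 1) ≠ 0 := by positivity
        have hm2 : ((m : ℝ) - 1) ≠ 0 := by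
          have : (2 : ℝ) ≤ m := by exact_mod_cast hm
          linarith
        have hA : (2 : ℝ) ^ (((k : ℝ) - 1) / 2) * ((2 : ℝ) ^ k)⁻¹ * 2⁻¹
            = (2 : ℝ) ^ (-((k : ℝ) - 1) / 2 - 2) := by
          rw [← Real.rpow_natCast 2 k, ← Real.rpow_neg_one (2 : ℝ),
            ← Real.rpow_neg (by norm_num : (0:ℝ) ≤ 2) (k : ℝ),
            ← Real.rpow_add (by norm_num : (0:ℝ) < 2),
            ← Real.rpow_add (by norm_num : (0:ℝ) < 2)]
          congr 1; ring
        rw [← hA]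
        field_simp
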